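/- Let B = (b_{jk})_{1 ≤ j,k ≤ n} be a complex n×n matrix with units on the diagonal such that |b_{jk}| < 3/2 whenever j < k and |b_{jk}| < 4^{−n} whenever j > k. Then the matrix B is non-degenerate (has nonzero determinant). -/

import Mathlib

lemma aux_sum_bound (n j : ℕ) (hj : j < n) :
    ∑ m ∈ Finset.range n,
      (if m < j then (4:ℝ)^j * ((4:ℝ)^n)⁻¹ * ((4:ℝ)^m)⁻¹
       else if j < m then (4:ℝ)^j * (3/2) * ((4:ℝ)^m)⁻¹ else 0) ≤ 5/6 := by
  have h4 : ((4:ℝ)⁻¹) ≠ 1 := by norm_num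
  rw [Finset.range_eq_Ico, ← Finset.sum_Ico_consecutive _ (Nat.zero_le j) hj.le]
  have hlow : ∑ m ∈ Finset.Ico 0 j,
      (if m < j then (4:ℝ)^j * ((4:ℝ)^n)⁻¹ * ((4:ℝ)^m)⁻¹
       else if j < m then (4:ℝ)^j * (3/2) * ((4:ℝ)^m)⁻¹ else 0)
      = (4:ℝ)^j * ((4:ℝ)^n)⁻¹ * ∑ m ∈ Finset.range j, ((4:ℝ)⁻¹)^m := by
    rw [Finset.mul_sum]
    rw [show Finset.Ico 0 j = Finset.range j by rw [Finset.range_eq_Ico]]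
    refine Finset.sum_congr rfl fun m hm => ?_
    rw [if_pos (Finset.mem_range.mp hm), inv_pow]
  have hhigh : ∑ m ∈ Finset.Ico j n,
      (if m < j then (4:ℝ)^j * ((4:ℝ)^n)⁻¹ * ((4:ℝ)^m)⁻¹
       else if j < m then (4:ℝ)^j * (3/2) * ((4:ℝ)^m)⁻¹ else 0)
      = (4:ℝ)^j * (3/2) * ∑ m ∈ Finset.Ico (j+1) n, ((4:ℝ)⁻¹)^m := by
    rw [Finset.sum_eq_sum_Ico_succ_bot hj, if_neg (lt_irrefl j), if_neg (lt_irrefl j),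
      Finset.mul_sum]
    simp only [zero_add]
    refine Finset.sum_congr rfl fun m hm => ?_
    have := (Finset.mem_Ico.mp hm).1
    rw [if_neg (by omega), if_pos (by omega), inv_pow]
  rw [hlow, hhigh]
  have g1 : ∑ m ∈ Finset.range j, ((4:ℝ)⁻¹)^m = (((4:ℝ)⁻¹)^j - 1)/((4:ℝ)⁻¹ - 1) :=
    geom_sum_eq h4 j
  have g2 : ∑ m ∈ Finset.Ico (j+1) n, ((4:ℝ)⁻¹)^m
      = (((4:ℝ)⁻¹)^n - ((4:ℝ)⁻¹)^(j+1))/((4:ℝ)⁻¹ - 1) := geom_sum_Ico h4 hj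
  have g1' : ∑ m ∈ Finset.range j, ((4:ℝ)⁻¹)^m = (1 - ((4:ℝ)⁻¹)^j) * (4/3) := by
    rw [g1]; ring
  have g2' : ∑ m ∈ Finset.Ico (j+1) n, ((4:ℝ)⁻¹)^m
      = (((4:ℝ)⁻¹)^(j+1) - ((4:ℝ)⁻¹)^n) * (4/3) := by
    rw [g2]; ring
  rw [g1', g2']
  have hjn : (4:ℝ)^(j+1) ≤ (4:ℝ)^n := pow_le_pow_right₀ (by norm_num) hj
  have hcancel : (4:ℝ)^j * ((4:ℝ)⁻¹)^j = 1 := by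
    rw [inv_pow, mul_inv_cancel₀ (by positivity)]
  have hpj : (0:ℝ) < (4:ℝ)^j := by positivity
  have hpn : (0:ℝ) < (4:ℝ)^n := by positivity
  have hinvn : (0:ℝ) < ((4:ℝ)⁻¹)^n := by positivity
  have hinvj : (0:ℝ) ≤ ((4:ℝ)⁻¹)^j := by positivity
  have h1 : (4:ℝ)^j * ((4:ℝ)^n)⁻¹ * ((1 - ((4:ℝ)⁻¹)^j) * (4/3)) ≤ 1/3 := by
    have h2 : (4:ℝ)^j * ((4:ℝ)^n)⁻¹ ≤ 4⁻¹ := by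
      rw [← div_eq_mul_inv, div_le_iff₀ hpn]
      have : (4:ℝ)^(j+1) = 4^j * 4 := by ring
      nlinarith
    nlinarith [mul_pos hpj (inv_pos.mpr hpn)]
  have h2 : (4:ℝ)^j * (3/2) * ((((4:ℝ)⁻¹)^(j+1) - ((4:ℝ)⁻¹)^n) * (4/3)) ≤ 1/2 := by
    have e2 : ((4:ℝ)⁻¹)^(j+1) = ((4:ℝ)⁻¹)^j * 4⁻¹ := by ring
    nlinarith
  linarith


/-- Let `B = (b_{jk})` be a complex `n×n` matrix with units on the diagonal such that
`|b_{jk}| < 3/2` whenever `j < k` and `|b_{jk}| < 4^{-n}` whenever `j > k`.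
Then `B` is non-degenerate, i.e. `det B ≠ 0`. -/
theorem matrix_nondegenerate_of_small_lower_entries
    (n : ℕ) (B : Matrix (Fin n) (Fin n) ℂ)
    (hdiag : ∀ j, B j j = 1)
    (hupper : ∀ j k, j < k → ‖B j k‖ < 3 / 2)
    (hlower : ∀ j k, k < j → ‖B j k‖ < ((4 : ℝ) ^ n)⁻¹) :
    B.det ≠ 0 := by
  classical
  set D : Matrix (Fin n) (Fin n) ℂ := Matrix.diagonal (fun j => (4:ℂ)^(j:ℕ)) with hD
  set E : Matrix (Fin n) (Fin n) ℂ := Matrix.diagonal (fun j => ((4:ℂ)^(j:ℕ))⁻¹) with hE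
  have hdet : (D * B * E).det = B.det := by
    rw [Matrix.det_mul, Matrix.det_mul, hD, hE, Matrix.det_diagonal, Matrix.det_diagonal]
    rw [mul_comm, ← mul_assoc, ← Finset.prod_mul_distrib]
    have : ∀ j : Fin n, ((4:ℂ)^(j:ℕ))⁻¹ * (4:ℂ)^(j:ℕ) = 1 := fun j => by
      rw [inv_mul_cancel₀ (pow_ne_zero _ (by norm_num))]
    simp [this]
  have hentry : ∀ j k, (D * B * E) j k = (4:ℂ)^(j:ℕ) * B j k * ((4:ℂ)^(k:ℕ))⁻¹ := by
    intro j k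
    rw [hD, hE, Matrix.mul_diagonal, Matrix.diagonal_mul]
  rw [← hdet]
  apply det_ne_zero_of_sum_row_lt_diag
  intro j
  have hdiagentry : ‖(D * B * E) j j‖ = 1 := by
    rw [hentry, hdiag, mul_one, mul_inv_cancel₀ (pow_ne_zero _ (by norm_num)), norm_one]
  rw [hdiagentry]
  have hnorm4 : ‖(4:ℂ)‖ = 4 := by norm_num
  set f : ℕ → ℝ := fun m =>
      if m < (j:ℕ) then (4:ℝ)^(j:ℕ) * ((4:ℝ)^n)⁻¹ * ((4:ℝ)^m)⁻¹
      else if (j:ℕ) < m then (4:ℝ)^(j:ℕ) * (3/2) * ((4:ℝ)^m)⁻¹ else 0 with hf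
  have hstep : ∑ k ∈ Finset.univ.erase j, ‖(D * B * E) j k‖
      ≤ ∑ k ∈ Finset.univ.erase j, f (k:ℕ) := by
    refine Finset.sum_le_sum fun k hk => ?_
    have hkj : k ≠ j := Finset.ne_of_mem_erase hk
    rw [hentry, norm_mul, norm_mul, norm_inv, norm_pow, norm_pow, hnorm4]
    rcases lt_or_gt_of_ne hkj with h | h
    · -- k < j : lower entry
      have hb : ‖B j k‖ ≤ ((4:ℝ)^n)⁻¹ := by
        exact (hlower j k h).le
      rw [hf]
      simp only [if_pos (show (k:ℕ) < (j:ℕ) from h)]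
      have : (0:ℝ) < ((4:ℝ)^(k:ℕ))⁻¹ := by positivity
      have hp : (0:ℝ) ≤ (4:ℝ)^(j:ℕ) := by positivity
      calc (4:ℝ)^(j:ℕ) * ‖B j k‖ * ((4:ℝ)^(k:ℕ))⁻¹
          ≤ (4:ℝ)^(j:ℕ) * ((4:ℝ)^n)⁻¹ * ((4:ℝ)^(k:ℕ))⁻¹ := by
            apply mul_le_mul_of_nonneg_right _ this.le
            exact mul_le_mul_of_nonneg_left hb hp
        _ = _ := rfl
    · -- j < k : upper entry
      have hb : ‖B j k‖ ≤ 3/2 := by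
        exact (hupper j k h).le
      rw [hf]
      simp only [if_neg (show ¬ (k:ℕ) < (j:ℕ) by omega), if_pos (show (j:ℕ) < (k:ℕ) from h)]
      have : (0:ℝ) < ((4:ℝ)^(k:ℕ))⁻¹ := by positivity
      have hp : (0:ℝ) ≤ (4:ℝ)^(j:ℕ) := by positivity
      apply mul_le_mul_of_nonneg_right _ this.le
      exact mul_le_mul_of_nonneg_left hb hp
  have hfj : f (j:ℕ) = 0 := by simp [hf]
  have hsum2 : ∑ k ∈ Finset.univ.erase j, f (k:ℕ) = ∑ k : Fin n, f (k:ℕ) :=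
    Finset.sum_erase _ hfj
  have hsum3 : ∑ k : Fin n, f (k:ℕ) = ∑ m ∈ Finset.range n, f m :=
    Fin.sum_univ_eq_sum_range f n
  have hkey := aux_sum_bound n (j:ℕ) j.isLt
  calc ∑ k ∈ Finset.univ.erase j, ‖(D * B * E) j k‖
      ≤ ∑ k ∈ Finset.univ.erase j, f (k:ℕ) := hstep
    _ = ∑ m ∈ Finset.range n, f m := by rw [hsum2, hsum3]
    _ ≤ 5/6 := hkey
    _ < 1 := by norm_num
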